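/- arXiv:quant-ph/0106151 — 3 statements merged into one kernel-verified Lean document; each statement's English description precedes it below -/
import Mathlib

section
/- Let H, ℓ ∈ M₂(ℂ) with H Hermitian, and define L[X] = −i[H,X] + (1/2)([ℓX,ℓ†] + [ℓ,Xℓ†]). Then L[E₁₁] = 0 if and only if ℓ₂₁ = 0 and ℓ₁₂·conj(ℓ₁₁) = 2i·h₁₂. -/
open Matrix ComplexOrder

/-- The Lindblad generator with Hamiltonian `H` and Lindblad operator `l`. -/
noncomputable def lindblad (H l X : Matrix (Fin 2) (Fin 2) ℂ) : Matrix (Fin 2) (Fin 2) ℂ :=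
  (-Complex.I) • (H * X - X * H) +
    (2⁻¹ : ℂ) • ((l * X * lᴴ - lᴴ * (l * X)) + (l * (X * lᴴ) - X * lᴴ * l))

theorem stmt_9 (H l : Matrix (Fin 2) (Fin 2) ℂ) (hH : H.IsHermitian) :
    lindblad H l (Matrix.single 0 0 (1 : ℂ)) = 0 ↔
      l 1 0 = 0 ∧ l 0 1 * (starRingEnd ℂ) (l 0 0) = 2 * Complex.I * H 0 1 := by
  have hH' : H 1 0 = (starRingEnd ℂ) (H 0 1) := (hH.apply 1 0).symm
  rw [← Matrix.ext_iff]
  simp only [Fin.forall_fin_two, lindblad, Matrix.add_apply, Matrix.smul_apply,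
    Matrix.sub_apply, Matrix.mul_apply, Fin.sum_univ_two, Matrix.conjTranspose_apply,
    Matrix.single, Matrix.of_apply, Matrix.zero_apply, smul_eq_mul]
  norm_num
  constructor
  · rintro ⟨⟨h1, h2⟩, h3, h4⟩
    have hc' : (starRingEnd ℂ) (l 1 0) = 0 := by rw [h4]; simp
    refine ⟨h4, ?_⟩
    linear_combination (-2 : ℂ) * h2 + (2 * l 0 0 - l 1 1) * hc'
  · rintro ⟨hc, hb⟩
    have hc' : (starRingEnd ℂ) (l 1 0) = 0 := by rw [hc]; simp
    have hb' := congrArg (starRingEnd ℂ) hb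
    simp only [_root_.map_mul, Complex.conj_conj, map_ofNat, Complex.conj_I] at hb'
    refine ⟨⟨?_, ?_⟩, ?_, hc⟩
    · linear_combination (-(starRingEnd ℂ) (l 1 0)) * hc
    · linear_combination (-1/2 : ℂ) * hb + (l 0 0 - l 1 1 / 2) * hc'
    · linear_combination (-1/2 : ℂ) * hb' + (-Complex.I) * hH' +
        ((starRingEnd ℂ) (l 0 0) - (starRingEnd ℂ) (l 1 1) / 2) * hc
end

section
/- Let H, ℓ ∈ M₂(ℂ) with H Hermitian, and define L[X] = −i[H,X] + (1/2)([ℓX,ℓ†] + [ℓ,Xℓ†]). Then L[E₂₂] = 0 if and only if ℓ₁₂ = 0 and ℓ₂₁·conj(ℓ₂₂) = 2i·h₂₁. -/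
open Matrix ComplexOrder
theorem stmt_10 (H l : Matrix (Fin 2) (Fin 2) ℂ) (hH : H.IsHermitian) :
    lindblad H l (Matrix.single 1 1 (1 : ℂ)) = 0 ↔
      l 0 1 = 0 ∧ l 1 0 * (starRingEnd ℂ) (l 1 1) = 2 * Complex.I * H 1 0 := by
  have hH01 : H 0 1 = (starRingEnd ℂ) (H 1 0) := (hH.apply 0 1).symm
  rw [← Matrix.ext_iff]
  constructor
  · intro h
    have h00 := h 0 0
    have h10 := h 1 0
    simp [lindblad, Matrix.mul_apply, Fin.sum_univ_two, Matrix.single,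
      conjTranspose_apply] at h00 h10
    refine ⟨h00, ?_⟩
    simp [h00] at h10
    linear_combination -2 * h10
  · rintro ⟨h1, h2⟩ i j
    have h2' : (starRingEnd ℂ) (l 1 0) * l 1 1 = -(2 * Complex.I * (starRingEnd ℂ) (H 1 0)) := by
      have h := congrArg (starRingEnd ℂ) h2
      simp only [_root_.map_mul, Complex.conj_I, map_ofNat, starRingEnd_self_apply] at h
      linear_combination h
    fin_cases i <;> fin_cases j <;>
      simp [lindblad, Matrix.mul_apply, Fin.sum_univ_two, Matrix.single,
        conjTranspose_apply, hH01, h1] <;>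
      first
        | linear_combination -2⁻¹ * h2'
        | linear_combination -2⁻¹ * h2
        | ring
end

section
/- With M as in the Jaynes–Cummings block (entries M₁₁ = ω₀/2 + nω, M₁₂ = M₂₁ = ε√(n+1), M₂₂ = −ω₀/2 + (n+1)ω, ε ≠ 0), let θ satisfy tan θ = ((ω−ω₀)/2 + √(((ω−ω₀)/2)² + (n+1)ε²)) / (ε√(n+1)). Then the unit vector (cos θ, sin θ) is an eigenvector of M with eigenvalue E⁺ = (n+1/2)ω + √(((ω−ω₀)/2)² + (n+1)ε²), and (−sin θ, cos θ) is an eigenvector with eigenvalue E⁻ = (n+1/2)ω − √(((ω−ω₀)/2)² + (n+1)ε²); in particular these two vectors form an orthonormal basis of ℝ². -/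
open Matrix ComplexOrder

theorem stmt_16 (ω₀ ω ε : ℝ) (hε : ε ≠ 0) (n : ℕ) (θ : ℝ)
    (hθ : Real.tan θ =
      ((ω - ω₀) / 2 + Real.sqrt (((ω - ω₀) / 2) ^ 2 + (n + 1) * ε ^ 2)) /
        (ε * Real.sqrt (n + 1)))
    (M : Matrix (Fin 2) (Fin 2) ℝ)
    (hM : M = !![ω₀ / 2 + n * ω, ε * Real.sqrt (n + 1);
                 ε * Real.sqrt (n + 1), -ω₀ / 2 + (n + 1) * ω]) :
    M *ᵥ ![Real.cos θ, Real.sin θ] =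
        ((n + 1 / 2) * ω + Real.sqrt (((ω - ω₀) / 2) ^ 2 + (n + 1) * ε ^ 2)) •
          ![Real.cos θ, Real.sin θ] ∧
    M *ᵥ ![-Real.sin θ, Real.cos θ] =
        ((n + 1 / 2) * ω - Real.sqrt (((ω - ω₀) / 2) ^ 2 + (n + 1) * ε ^ 2)) •
          ![-Real.sin θ, Real.cos θ] ∧
    ![Real.cos θ, Real.sin θ] ⬝ᵥ ![Real.cos θ, Real.sin θ] = 1 ∧
    ![-Real.sin θ, Real.cos θ] ⬝ᵥ ![-Real.sin θ, Real.cos θ] = 1 ∧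
    ![Real.cos θ, Real.sin θ] ⬝ᵥ ![-Real.sin θ, Real.cos θ] = 0 := by
  set Δ : ℝ := (ω - ω₀) / 2 with hΔ
  set s : ℝ := Real.sqrt (n + 1) with hsdef
  set R : ℝ := Real.sqrt (Δ ^ 2 + (n + 1) * ε ^ 2) with hRdef
  have hn1 : (0:ℝ) < (n : ℝ) + 1 := by positivity
  have hs : 0 < s := Real.sqrt_pos.mpr hn1
  have hs2 : s ^ 2 = (n : ℝ) + 1 := Real.sq_sqrt hn1.le
  have hR2 : R ^ 2 = Δ ^ 2 + (n + 1) * ε ^ 2 := Real.sq_sqrt (by positivity)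
  have hRpos : |Δ| < R := by
    have : Δ ^ 2 < R ^ 2 := by
      rw [hR2]; nlinarith [hn1, sq_pos_of_ne_zero hε]
    nlinarith [abs_nonneg Δ, sq_abs Δ, Real.sqrt_nonneg (Δ ^ 2 + (n + 1) * ε ^ 2)]
  have hΔR : 0 < Δ + R := by
    have := neg_abs_le Δ; linarith
  have hεs : ε * s ≠ 0 := mul_ne_zero hε hs.ne'
  have hc : Real.cos θ ≠ 0 := by
    intro h
    have ht : Real.tan θ = 0 := by
      rw [Real.tan_eq_sin_div_cos, h, div_zero]
    rw [ht] at hθ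
    have : (Δ + R) = 0 := by
      field_simp at hθ
      linarith [hθ]
    linarith
  -- key equation 1 : ε s sinθ = (Δ + R) cosθ
  have E1 : ε * s * Real.sin θ = (Δ + R) * Real.cos θ := by
    rw [Real.tan_eq_sin_div_cos] at hθ
    field_simp at hθ
    linarith [hθ]
  -- key equation 2 : ε s cosθ = (R - Δ) sinθ
  have E2 : ε * s * Real.cos θ = (R - Δ) * Real.sin θ := by
    have h3 : (R - Δ) * (ε * s * Real.sin θ) = (R ^ 2 - Δ ^ 2) * Real.cos θ := by
      rw [E1]; ring
    have h4 : (R - Δ) * (ε * s * Real.sin θ) = (ε * s) ^ 2 * Real.cos θ := by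
      rw [h3, hR2, ← hs2]; ring
    have h5 : (ε * s) * ((R - Δ) * Real.sin θ) = (ε * s) * (ε * s * Real.cos θ) := by
      nlinarith [h4]
    have := mul_left_cancel₀ hεs h5
    linarith
  have hpy : Real.sin θ ^ 2 + Real.cos θ ^ 2 = 1 := Real.sin_sq_add_cos_sq θ
  rw [hΔ] at E1 E2
  rw [hRdef, hΔ] at E1 E2 ⊢
  subst hM
  refine ⟨?_, ?_, ?_, ?_, ?_⟩
  · funext i
    fin_cases i <;>
      simp [Matrix.mulVec, dotProduct, Fin.sum_univ_two]
    · linear_combination E1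
    · linear_combination E2
  · funext i
    fin_cases i <;>
      simp [Matrix.mulVec, dotProduct, Fin.sum_univ_two]
    · linear_combination E2
    · linear_combination -E1
  · simp only [dotProduct, Fin.sum_univ_two, Matrix.cons_val_zero, Matrix.cons_val_one,
      Matrix.head_cons]
    linear_combination hpy
  · simp only [dotProduct, Fin.sum_univ_two, Matrix.cons_val_zero, Matrix.cons_val_one,
      Matrix.head_cons]
    linear_combination hpy
  · simp only [dotProduct, Fin.sum_univ_two, Matrix.cons_val_zero, Matrix.cons_val_one,
      Matrix.head_cons]
    ring
end
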